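/- Let r, p > 0, λ ∈ (0,1), and let (θ(q))_{q} be coefficients satisfying Σ_q c_p(q)|θ(q)|² ≤ 1 where c_s(q) = 1 + ‖q‖^{2s}. Then Σ_q (λ c_r(q)/(1 + λ c_r(q)))² |θ(q)|² ≤ C·λ^{min(2, p/r)} for a constant C depending only on r, p, d. -/

import Mathlib

set_option maxHeartbeats 1000000 in
lemma key_pointwise (r p : ℝ) (hr : 0 < r) (hp : 0 < p) (x lam : ℝ)
    (hx : 0 ≤ x) (hl0 : 0 < lam) (hl1 : lam < 1) :
    (lam * (1 + x ^ (2 * r)) / (1 + lam * (1 + x ^ (2 * r)))) ^ 2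
      ≤ (4 + (2:ℝ) ^ (p / r)) * lam ^ (min 2 (p / r)) * (1 + x ^ (2 * p)) := by
  set α : ℝ := min 2 (p / r) with hα
  have hαpos : 0 < α := lt_min (by norm_num) (div_pos hp hr)
  have hα2 : α ≤ 2 := min_le_left _ _
  have hαpr : α ≤ p / r := min_le_right _ _
  have hx2r : (0:ℝ) ≤ x ^ (2 * r) := Real.rpow_nonneg hx _
  have hx2p : (0:ℝ) ≤ x ^ (2 * p) := Real.rpow_nonneg hx _
  have heq : (x ^ (2 * r)) ^ (p / r) = x ^ (2 * p) := by
    rw [← Real.rpow_mul hx]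
    congr 1
    field_simp
  set ct : ℝ := 1 + x ^ (2 * r) with hct
  have hct1 : (1:ℝ) ≤ ct := by simp only [hct]; linarith
  have hct0 : (0:ℝ) < ct := by linarith
  set t : ℝ := lam * ct with hT
  have ht0 : 0 < t := mul_pos hl0 hct0
  have h1t : (0:ℝ) < 1 + t := by linarith
  have hshr0 : 0 ≤ t / (1 + t) := by positivity
  set M : ℝ := max 1 (x ^ (2 * r)) with hM
  have hM1 : (1:ℝ) ≤ M := le_max_left _ _
  have hM0 : (0:ℝ) ≤ M := by linarith
  have hctM : ct ≤ 2 * M := by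
    rcases le_total (x ^ (2 * r)) 1 with h | h
    · have hMe : M = 1 := max_eq_left h
      rw [hMe]; simp only [hct]; linarith
    · have hMe : M = x ^ (2 * r) := max_eq_right h
      rw [hMe]; simp only [hct]; linarith
  have hMcp : M ^ (p / r) ≤ 1 + x ^ (2 * p) := by
    rcases le_total x 1 with h | h
    · have h1 : x ^ (2 * r) ≤ 1 := Real.rpow_le_one hx h (by positivity)
      have hMe : M = 1 := max_eq_left h1
      rw [hMe, Real.one_rpow]; linarith
    · have h1 : (1:ℝ) ≤ x ^ (2 * r) := Real.one_le_rpow h (by positivity : (0:ℝ) < 2*r).le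
      have hMe : M = x ^ (2 * r) := max_eq_right h1
      rw [hMe, heq]; linarith
  have hCpos : (0:ℝ) < (2:ℝ) ^ (p / r) := Real.rpow_pos_of_pos (by norm_num) _
  have hcp0 : (0:ℝ) ≤ 1 + x ^ (2 * p) := by linarith
  have hlα : (0:ℝ) ≤ lam ^ α := (Real.rpow_pos_of_pos hl0 _).le
  rcases le_or_gt t 1 with ht1 | ht1
  · -- small-frequency case: shrink ≤ t ≤ 1
    have hshr : t / (1 + t) ≤ t := div_le_self ht0.le (by linarith)
    have h1 : (t / (1 + t)) ^ 2 ≤ t ^ 2 := pow_le_pow_left₀ hshr0 hshr 2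
    have h2 : t ^ (2:ℝ) ≤ t ^ α := Real.rpow_le_rpow_of_exponent_ge ht0 ht1 hα2
    have h2' : t ^ 2 ≤ t ^ α := by
      rw [← Real.rpow_two]; exact h2
    have h3 : t ^ α = lam ^ α * ct ^ α := Real.mul_rpow hl0.le hct0.le
    have h4 : ct ^ α ≤ (2 * M) ^ α := Real.rpow_le_rpow hct0.le hctM hαpos.le
    have h5 : (2 * M) ^ α = (2:ℝ) ^ α * M ^ α := Real.mul_rpow (by norm_num) hM0
    have h6 : (2:ℝ) ^ α ≤ 4 := by
      have h61 : (2:ℝ) ^ α ≤ (2:ℝ) ^ (2:ℝ) :=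
        Real.rpow_le_rpow_of_exponent_le (by norm_num) hα2
      have h22 : (2:ℝ) ^ (2:ℝ) = 4 := by
        rw [Real.rpow_two]; norm_num
      linarith
    have h7 : M ^ α ≤ M ^ (p / r) := Real.rpow_le_rpow_of_exponent_le hM1 hαpr
    have hMα0 : (0:ℝ) ≤ M ^ α := Real.rpow_nonneg hM0 _
    have hMpr0 : (0:ℝ) ≤ M ^ (p / r) := Real.rpow_nonneg hM0 _
    have h8 : ct ^ α ≤ 4 * (1 + x ^ (2 * p)) := by
      calc ct ^ α ≤ (2:ℝ) ^ α * M ^ α := by rw [← h5]; exact h4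
        _ ≤ 4 * M ^ α := mul_le_mul_of_nonneg_right h6 hMα0
        _ ≤ 4 * M ^ (p / r) := mul_le_mul_of_nonneg_left h7 (by norm_num)
        _ ≤ 4 * (1 + x ^ (2 * p)) := mul_le_mul_of_nonneg_left hMcp (by norm_num)
    calc (t / (1 + t)) ^ 2 ≤ t ^ 2 := h1
      _ ≤ t ^ α := h2'
      _ = lam ^ α * ct ^ α := h3
      _ ≤ lam ^ α * (4 * (1 + x ^ (2 * p))) := mul_le_mul_of_nonneg_left h8 hlα
      _ ≤ (4 + (2:ℝ) ^ (p / r)) * lam ^ α * (1 + x ^ (2 * p)) := by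
          nlinarith [mul_nonneg (mul_nonneg hCpos.le hlα) hcp0, mul_nonneg hlα hcp0]
  · -- large-frequency case: shrink ≤ 1
    have hshr : t / (1 + t) ≤ 1 := by
      rw [div_le_one h1t]; linarith
    have h1 : (t / (1 + t)) ^ 2 ≤ 1 := by nlinarith
    have hgoal : (1:ℝ) ≤ (4 + (2:ℝ) ^ (p / r)) * lam ^ α * (1 + x ^ (2 * p)) := by
      rcases le_or_gt (1/2 : ℝ) lam with hhalf | hhalf
      · have hlam2 : lam ^ (2:ℝ) ≤ lam ^ α :=
          Real.rpow_le_rpow_of_exponent_ge hl0 hl1.le hα2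
        have hlam2' : lam ^ (2:ℝ) = lam ^ 2 := Real.rpow_two lam
        have h14 : (1/4 : ℝ) ≤ lam ^ α := by
          rw [hlam2'] at hlam2; nlinarith
        nlinarith [hCpos.le, mul_nonneg hCpos.le (mul_nonneg hlα hx2p),
          mul_nonneg hlα hx2p]
      · -- λ < 1/2 : λ x^{2r} ≥ 1/2
        have ht1' : 1 < lam * (1 + x ^ (2 * r)) := ht1
        have hlx : (1/2 : ℝ) ≤ lam * x ^ (2 * r) := by nlinarith
        have hxbig : 1 / (2 * lam) ≤ x ^ (2 * r) := by
          rw [div_le_iff₀ (by positivity)]; nlinarith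
        have hxp : (1 / (2 * lam)) ^ (p / r) ≤ x ^ (2 * p) := by
          have h := Real.rpow_le_rpow (by positivity) hxbig (div_pos hp hr).le
          rwa [heq] at h
        have hl_pr0 : (0:ℝ) ≤ lam ^ (p / r) := (Real.rpow_pos_of_pos hl0 _).le
        have hlampr : lam ^ (p / r) ≤ lam ^ α :=
          Real.rpow_le_rpow_of_exponent_ge hl0 hl1.le hαpr
        have hprod : (2:ℝ) ^ (p / r) * lam ^ (p / r) * (1 / (2 * lam)) ^ (p / r) = 1 := by
          rw [← Real.mul_rpow (by norm_num) hl0.le,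
            ← Real.mul_rpow (by positivity) (by positivity)]
          have he : (2:ℝ) * lam * (1 / (2 * lam)) = 1 := by field_simp
          rw [he, Real.one_rpow]
        calc (1:ℝ) = (2:ℝ) ^ (p / r) * lam ^ (p / r) * (1 / (2 * lam)) ^ (p / r) :=
              hprod.symm
          _ ≤ (2:ℝ) ^ (p / r) * lam ^ (p / r) * x ^ (2 * p) :=
              mul_le_mul_of_nonneg_left hxp (by positivity)
          _ ≤ (2:ℝ) ^ (p / r) * lam ^ α * x ^ (2 * p) :=
              mul_le_mul_of_nonneg_right
                (mul_le_mul_of_nonneg_left hlampr hCpos.le) hx2p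
          _ ≤ (4 + (2:ℝ) ^ (p / r)) * lam ^ α * (1 + x ^ (2 * p)) := by
              nlinarith [mul_nonneg hlα hx2p, mul_nonneg hCpos.le hlα,
                mul_nonneg (mul_nonneg hCpos.le hlα) hx2p]
    calc (t / (1 + t)) ^ 2 ≤ 1 := h1
      _ ≤ _ := hgoal

/-- Regularization-bias bound over a Sobolev ball: if `Σ_q c_p(q)|θ(q)|² ≤ 1` with
`c_s(q) = 1 + N(q)^{2s}`, then `Σ_q (λc_r(q)/(1+λc_r(q)))² |θ(q)|² ≤ C λ^{min(2, p/r)}`. -/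
theorem stmt_8 (r p : ℝ) (hr : 0 < r) (hp : 0 < p) :
    ∃ C : ℝ, 0 < C ∧
      ∀ (Q : Type*) (N : Q → ℝ) (θ : Q → ℝ) (lam : ℝ),
        0 < lam → lam < 1 → (∀ q, 0 ≤ N q) →
        Summable (fun q => (1 + N q ^ (2 * p)) * (θ q) ^ 2) →
        (∑' q, (1 + N q ^ (2 * p)) * (θ q) ^ 2) ≤ 1 →
        ∑' q, (lam * (1 + N q ^ (2 * r)) / (1 + lam * (1 + N q ^ (2 * r)))) ^ 2 * (θ q) ^ 2
          ≤ C * lam ^ (min 2 (p / r)) := by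
  refine ⟨4 + (2:ℝ) ^ (p / r), by positivity, ?_⟩
  intro Q N θ lam hl0 hl1 hN hsum hsum1
  set C : ℝ := 4 + (2:ℝ) ^ (p / r) with hC
  have hC0 : 0 < C := by positivity
  have hlα : (0:ℝ) < lam ^ (min 2 (p / r)) := Real.rpow_pos_of_pos hl0 _
  have hkey : ∀ q, (lam * (1 + N q ^ (2 * r)) / (1 + lam * (1 + N q ^ (2 * r)))) ^ 2
      * (θ q) ^ 2 ≤ C * lam ^ (min 2 (p / r)) * ((1 + N q ^ (2 * p)) * (θ q) ^ 2) := by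
    intro q
    have h := key_pointwise r p hr hp (N q) lam (hN q) hl0 hl1
    calc (lam * (1 + N q ^ (2 * r)) / (1 + lam * (1 + N q ^ (2 * r)))) ^ 2 * (θ q) ^ 2
        ≤ C * lam ^ (min 2 (p / r)) * (1 + N q ^ (2 * p)) * (θ q) ^ 2 :=
          mul_le_mul_of_nonneg_right h (sq_nonneg _)
      _ = C * lam ^ (min 2 (p / r)) * ((1 + N q ^ (2 * p)) * (θ q) ^ 2) := by ring
  have hsum2 : Summable (fun q => C * lam ^ (min 2 (p / r))
      * ((1 + N q ^ (2 * p)) * (θ q) ^ 2)) := hsum.mul_left _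
  have hsumL : Summable (fun q =>
      (lam * (1 + N q ^ (2 * r)) / (1 + lam * (1 + N q ^ (2 * r)))) ^ 2 * (θ q) ^ 2) := by
    refine Summable.of_nonneg_of_le (fun q => by positivity) hkey hsum2
  calc ∑' q, (lam * (1 + N q ^ (2 * r)) / (1 + lam * (1 + N q ^ (2 * r)))) ^ 2 * (θ q) ^ 2
      ≤ ∑' q, C * lam ^ (min 2 (p / r)) * ((1 + N q ^ (2 * p)) * (θ q) ^ 2) :=
        Summable.tsum_le_tsum hkey hsumL hsum2
    _ = C * lam ^ (min 2 (p / r)) * ∑' q, (1 + N q ^ (2 * p)) * (θ q) ^ 2 := tsum_mul_left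
    _ ≤ C * lam ^ (min 2 (p / r)) * 1 :=
        mul_le_mul_of_nonneg_left hsum1 (by positivity)
    _ = C * lam ^ (min 2 (p / r)) := mul_one _
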